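/- Let n, k, b be natural numbers with k ≤ b. Then n divides lcm(k) · (C(b + n, k) − C(b, k)) in ℤ. -/

import Mathlib

/-- `ulcm k` is the least common multiple of `1, 2, …, k`, with `ulcm 0 = 1`. -/
def ulcm (k : ℕ) : ℕ := (Finset.Icc 1 k).lcm id

/-- `mu m` is the largest prime power dividing `m`. -/
def mu (m : ℕ) : ℕ := m.primeFactors.sup fun p => p ^ m.factorization p

/-- `f : ZMod n → ZMod m` is congruence preserving. -/
def CongPres (n m : ℕ) (f : ZMod n → ZMod m) : Prop :=
  ∀ d : ℕ, ∀ hd : d ∣ m, ∀ a b : ℕ, a < n → b < n → a ≡ b [MOD d] →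
    ZMod.castHom hd (ZMod d) (f a) = ZMod.castHom hd (ZMod d) (f b)

/-- `CP n m` is the number of congruence preserving functions `ZMod n → ZMod m`. -/
noncomputable def CP (n m : ℕ) : ℕ := Nat.card {f : ZMod n → ZMod m // CongPres n m f}


lemma key_dvd (n j : ℕ) (hj : 1 ≤ j) : n ∣ j * n.choose j := by
  match n, j with
  | 0, j => cases j with
    | zero => omega
    | succ i => simp
  | m+1, 0 => omega
  | m+1, i+1 =>
    exact ⟨m.choose i, by rw [mul_comm (i+1), ← Nat.add_one_mul_choose_eq]⟩

theorem stmt_3 (n k b : ℕ) (hkb : k ≤ b) :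
    (n : ℤ) ∣ (ulcm k : ℤ) * ((Nat.choose (b + n) k : ℤ) - (Nat.choose b k : ℤ)) := by
  unfold ulcm
  set L := (Finset.Icc 1 k).lcm id with hL
  have hvand := Nat.add_choose_eq b n k
  have hmem : ((k, 0) : ℕ × ℕ) ∈ Finset.HasAntidiagonal.antidiagonal k := by simp
  rw [← Finset.add_sum_erase _ _ hmem] at hvand
  simp only [Nat.choose_zero_right, mul_one] at hvand
  have : ((b + n).choose k : ℤ) - (b.choose k : ℤ) =
      ∑ ij ∈ (Finset.HasAntidiagonal.antidiagonal k).erase (k, 0), (b.choose ij.1 : ℤ) * (n.choose ij.2 : ℤ) := by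
    push_cast [hvand]; ring
  rw [this, Finset.mul_sum]
  refine Finset.dvd_sum fun ij hij => ?_
  have h1 : ij.2 ≠ 0 := by
    intro h
    have := Finset.mem_erase.mp hij
    have h2 := Finset.HasAntidiagonal.mem_antidiagonal.mp this.2
    exact this.1 (Prod.ext (by omega) h)
  have h2 : ij.2 ≤ k := by
    have := Finset.HasAntidiagonal.mem_antidiagonal.mp (Finset.mem_erase.mp hij).2; omega
  have hjL : ij.2 ∣ L := Finset.dvd_lcm (by simp [Finset.mem_Icc]; omega)
  have hn : (n : ℤ) ∣ (L : ℤ) * (n.choose ij.2 : ℤ) := by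
    obtain ⟨c, hc⟩ := hjL
    have := key_dvd n ij.2 (by omega)
    obtain ⟨d, hd⟩ := this
    exact ⟨d * c, by push_cast [hc]; nlinarith [hd]⟩
  obtain ⟨c, hc⟩ := hn
  exact ⟨(b.choose ij.1 : ℤ) * c, by linear_combination (b.choose ij.1 : ℤ) * hc⟩
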